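/- The bialternant formula for Schur polynomials: for a partition λ = (λ_1 ≥ ... ≥ λ_N ≥ 0) and distinct u_1,...,u_N in an integral domain, s_λ(u_1,...,u_N) · ∏_{1≤i<j≤N}(u_i − u_j) = det[u_j^{N−i+λ_i}]_{i,j=1}^N, where s_λ = det[h_{λ_i+j−i}(u)]_{i,j=1}^N. -/

import Mathlib

/-- Complete homogeneous symmetric polynomial in `u 0, …, u (N-1)`. -/
def hSym {R : Type*} [CommSemiring R] {N : ℕ} (u : Fin N → R) (j : ℕ) : R :=
  ∑ m : Sym (Fin N) j, (Multiset.map u m.1).prod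

/-- Integer-indexed `h`, vanishing in negative degrees. -/
def hZ {R : Type*} [CommSemiring R] {N : ℕ} (u : Fin N → R) (m : ℤ) : R :=
  if 0 ≤ m then hSym u m.toNat else 0

namespace Bialternant

open Finset

variable {R : Type*} [CommRing R]

/-- `h` over a general fintype. -/
def hh {α : Type*} [Fintype α] [DecidableEq α] (u : α → R) (m : ℕ) : R :=
  ∑ x : Sym α m, (Multiset.map u x.1).prod

/-- Integer-indexed version. -/
def hhZ {α : Type*} [Fintype α] [DecidableEq α] (u : α → R) (m : ℤ) : R :=
  if 0 ≤ m then hh u m.toNat else 0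

/-- Elementary symmetric functions of the values of `u`. -/
def ee {α : Type*} [Fintype α] (u : α → R) (k : ℕ) : R :=
  (Multiset.map u Finset.univ.val).esymm k

lemma hh_zero {α} [Fintype α] [DecidableEq α] (u : α → R) : hh u 0 = 1 := by
  rw [hh, Fintype.sum_unique]
  simp [Sym.eq_nil_of_card_zero (default : Sym α 0), Sym.coe_nil]

lemma hh_equiv {α β} [Fintype α] [Fintype β] [DecidableEq α] [DecidableEq β]
    (e : α ≃ β) (u : β → R) (m : ℕ) :
    hh (u ∘ e) m = hh u m := by
  rw [hh, hh]
  refine Fintype.sum_equiv (Sym.equivCongr e) _ _ fun x => ?_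
  simp [Sym.equivCongr, Multiset.map_map]

lemma hh_option {α} [Fintype α] [DecidableEq α] (u : Option α → R) (m : ℕ) :
    hh u (m+1) = u none * hh u m + hh (u ∘ some) (m+1) := by
  rw [hh, ← Equiv.sum_comp (symOptionSuccEquiv (α := α) (n := m)).symm]
  rw [Fintype.sum_sum_type]
  congr 1
  · rw [hh, Finset.mul_sum]
    refine Finset.sum_congr rfl fun x _ => ?_
    simp [symOptionSuccEquiv, Sym.coe_cons]
  · rw [hh]
    refine Finset.sum_congr rfl fun x _ => ?_
    change (Multiset.map u (Multiset.map some x.1)).prod = (Multiset.map (u ∘ some) x.1).prod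
    rw [Multiset.map_map]

lemma hhZ_equiv {α β} [Fintype α] [Fintype β] [DecidableEq α] [DecidableEq β]
    (e : α ≃ β) (u : β → R) (m : ℤ) :
    hhZ (u ∘ e) m = hhZ u m := by
  unfold hhZ; rw [hh_equiv]

lemma hhZ_neg {α} [Fintype α] [DecidableEq α] (u : α → R) {m : ℤ} (h : m < 0) :
    hhZ u m = 0 := if_neg (not_le.2 h)

lemma hhZ_zero {α} [Fintype α] [DecidableEq α] (u : α → R) : hhZ u 0 = 1 := by
  rw [hhZ, if_pos le_rfl]
  simpa using hh_zero u

lemma hhZ_option {α} [Fintype α] [DecidableEq α] (u : Option α → R) (m : ℤ) :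
    hhZ u m = u none * hhZ u (m - 1) + hhZ (u ∘ some) m := by
  rcases lt_trichotomy m 0 with h | h | h
  · rw [hhZ_neg _ h, hhZ_neg _ (by omega), hhZ_neg _ h]; ring
  · subst h
    rw [hhZ_zero, hhZ_zero, hhZ_neg _ (by norm_num)]
    ring
  · obtain ⟨k, hk⟩ : ∃ k : ℕ, m = (k : ℤ) + 1 := ⟨(m - 1).toNat, by omega⟩
    subst hk
    rw [hhZ, hhZ, hhZ, if_pos (by omega), if_pos (by omega), if_pos (by omega)]
    have h1 : ((k : ℤ) + 1).toNat = k + 1 := by omega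
    have h2 : ((k : ℤ) + 1 - 1).toNat = k := by omega
    rw [h1, h2, hh_option]

lemma ee_zero {α} [Fintype α] (u : α → R) : ee u 0 = 1 := by
  simp [ee, Multiset.esymm, Multiset.powersetCard_zero_left]

lemma ee_equiv {α β} [Fintype α] [Fintype β] (e : α ≃ β) (u : β → R) (k : ℕ) :
    ee (u ∘ e) k = ee u k := by
  unfold ee
  congr 1
  rw [← Multiset.map_map]
  congr 1
  calc Multiset.map (⇑e) Finset.univ.val = (Finset.univ.map e.toEmbedding).val := rfl
    _ = Finset.univ.val := by rw [Finset.univ_map_equiv_to_embedding]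

lemma esymm_cons (a : R) (s : Multiset R) (k : ℕ) :
    (a ::ₘ s).esymm (k+1) = s.esymm (k+1) + a * s.esymm k := by
  rw [Multiset.esymm, Multiset.powersetCard_cons, Multiset.map_add, Multiset.sum_add,
    Multiset.esymm, Multiset.esymm, Multiset.map_map]
  congr 1
  rw [← Multiset.sum_map_mul_left]
  congr 1
  exact Multiset.map_congr rfl fun t _ => by simp [Multiset.prod_cons]

lemma ee_card_lt {α} [Fintype α] (u : α → R) {k : ℕ} (h : Fintype.card α < k) :
    ee u k = 0 := by
  rw [ee, Multiset.esymm, Multiset.powersetCard_eq_empty _ (by simpa using h)]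
  simp

lemma univ_val_option (α : Type*) [Fintype α] [DecidableEq α] :
    (Finset.univ : Finset (Option α)).val = none ::ₘ Multiset.map some Finset.univ.val := by
  rfl

lemma ee_option {α} [Fintype α] [DecidableEq α] (u : Option α → R) (k : ℕ) :
    ee u (k+1) = ee (u ∘ some) (k+1) + u none * ee (u ∘ some) k := by
  unfold ee
  rw [univ_val_option, Multiset.map_cons, esymm_cons, Multiset.map_map]

/-- Orthogonality of `e` and `h`. -/
lemma orth : ∀ (n : ℕ) (u : Fin n → R) (m : ℤ),
    ∑ k ∈ range (n + 1), (-1 : R) ^ k * ee u k * hhZ u (m - k) =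
      if m = 0 then 1 else 0 := by
  intro n
  induction n with
  | zero =>
    intro u m
    have hempty : ∀ t : ℕ, hh u (t + 1) = 0 := by
      intro t
      haveI : IsEmpty (Sym (Fin 0) (t+1)) := by
        constructor
        intro x
        have h1 : x.1 ≠ 0 := by
          intro h0
          have := x.2
          rw [h0] at this
          simp at this
        obtain ⟨a, -⟩ := Multiset.exists_mem_of_ne_zero h1
        exact a.elim0
      rw [hh, Finset.univ_eq_empty, Finset.sum_empty]
    have hind : hhZ u m = if m = 0 then 1 else 0 := by
      rcases lt_trichotomy m 0 with h | h | h
      · rw [hhZ_neg _ h, if_neg (by omega)]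
      · subst h; rw [hhZ_zero]; simp
      · rw [if_neg (by omega), hhZ, if_pos (by omega)]
        obtain ⟨t, ht⟩ : ∃ t : ℕ, m.toNat = t + 1 := ⟨m.toNat - 1, by omega⟩
        rw [ht, hempty]
    rw [Finset.sum_range_succ, Finset.sum_range_zero, zero_add, ee_zero]
    simp only [pow_zero, one_mul, mul_one, Nat.cast_zero, sub_zero]
    exact hind
  | succ n ih =>
    intro u m
    set q : Option (Fin n) ≃ Fin (n+1) := (finSuccEquiv n).symm with hq
    set w : Option (Fin n) → R := u ∘ q with hw
    set v : Fin n → R := w ∘ some with hv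
    have hU : ∀ t : ℤ, hhZ u t = hhZ w t := fun t => (hhZ_equiv q u t).symm
    have hE : ∀ k, ee u k = ee w k := fun k => (ee_equiv q u k).symm
    have hVrec : ∀ t : ℤ, hhZ v t = hhZ w t - w none * hhZ w (t - 1) := by
      intro t
      rw [hhZ_option w t]
      ring_nf
      rfl
    calc ∑ k ∈ range (n+2), (-1:R)^k * ee u k * hhZ u (m - k)
        = ∑ k ∈ range (n+2), (-1:R)^k * ee w k * hhZ w (m - k) :=
          Finset.sum_congr rfl fun k _ => by rw [hU, hE]
      _ = ∑ k ∈ range (n+1), (-1:R)^k * ee v k * hhZ v (m - k) := ?_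
      _ = if m = 0 then 1 else 0 := ih v m
    -- main computation
    have hB1' : ∑ k ∈ range (n+2), (-1:R)^k * ee v k * hhZ w (m - k)
        = ∑ k ∈ range (n+1), (-1:R)^k * ee v k * hhZ w (m - k) := by
      rw [Finset.sum_range_succ, ee_card_lt v (by simp), mul_zero, zero_mul, add_zero]
    rw [Finset.sum_range_succ' (fun k => (-1:R)^k * ee w k * hhZ w (m - k)) (n+1)]
    have hsplit : ∀ k ∈ range (n+1),
        (-1:R)^(k+1) * ee w (k+1) * hhZ w (m - (k+1 : ℕ))
          = (-1:R)^(k+1) * ee v (k+1) * hhZ w (m - (k+1 : ℕ))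
            - w none * ((-1:R)^k * ee v k * hhZ w (m - 1 - k)) := by
      intro k _
      rw [show ee w (k+1) = ee v (k+1) + w none * ee v k from ee_option w k]
      have : (m - (k+1 : ℕ) : ℤ) = m - 1 - k := by push_cast; ring
      rw [this, pow_succ]
      ring
    rw [Finset.sum_congr rfl hsplit, Finset.sum_sub_distrib]
    have hfirst : (∑ k ∈ range (n+1), (-1:R)^(k+1) * ee v (k+1) * hhZ w (m - (k+1 : ℕ)))
        + (-1:R)^0 * ee w 0 * hhZ w (m - (0:ℕ))
        = ∑ k ∈ range (n+1), (-1:R)^k * ee v k * hhZ w (m - k) := by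
      rw [← hB1', Finset.sum_range_succ' (fun k => (-1:R)^k * ee v k * hhZ w (m - k)) (n+1)]
      congr 1
      rw [ee_zero, ee_zero]
    calc (∑ k ∈ range (n+1), (-1:R)^(k+1) * ee v (k+1) * hhZ w (m - (k+1:ℕ)))
          - (∑ k ∈ range (n+1), w none * ((-1:R)^k * ee v k * hhZ w (m - 1 - k)))
          + (-1:R)^0 * ee w 0 * hhZ w (m - (0:ℕ))
        = (∑ k ∈ range (n+1), (-1:R)^k * ee v k * hhZ w (m - k))
          - w none * ∑ k ∈ range (n+1), (-1:R)^k * ee v k * hhZ w (m - 1 - k) := by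
          rw [← hfirst, Finset.mul_sum]; ring
      _ = ∑ k ∈ range (n+1), (-1:R)^k * ee v k * hhZ v (m - k) := by
          rw [Finset.mul_sum, ← Finset.sum_sub_distrib]
          refine Finset.sum_congr rfl fun k _ => ?_
          rw [hVrec (m - k)]
          have : (m - k - 1 : ℤ) = m - 1 - k := by ring
          rw [this]
          ring

/-- The key identity: `∑ₖ (-1)^k e_k(û) h_{m-k}(u) = u_j ^ m`,
formulated with `Option`, the distinguished variable being `none`. -/
lemma key (n : ℕ) (w : Option (Fin n) → R) (m : ℕ) :
    ∑ k ∈ range (n+1), (-1:R)^k * ee (w ∘ some) k * hhZ w ((m : ℤ) - k) = w none ^ m := by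
  have E : ∀ m : ℤ, ∑ k ∈ range (n+1), (-1:R)^k * ee (w ∘ some) k * hhZ w (m - k)
      = w none * (∑ k ∈ range (n+1), (-1:R)^k * ee (w ∘ some) k * hhZ w ((m-1) - k))
        + (if m = 0 then 1 else 0) := by
    intro t
    have horth := orth n (w ∘ some) t
    calc ∑ k ∈ range (n+1), (-1:R)^k * ee (w ∘ some) k * hhZ w (t - k)
        = ∑ k ∈ range (n+1), ((-1:R)^k * ee (w ∘ some) k
            * (w none * hhZ w (t - k - 1) + hhZ (w ∘ some) (t - k))) :=
          Finset.sum_congr rfl fun k _ => by rw [← hhZ_option w (t - k)]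
      _ = w none * (∑ k ∈ range (n+1), (-1:R)^k * ee (w ∘ some) k * hhZ w ((t-1) - k))
          + ∑ k ∈ range (n+1), (-1:R)^k * ee (w ∘ some) k * hhZ (w ∘ some) (t - k) := by
          rw [Finset.mul_sum, ← Finset.sum_add_distrib]
          refine Finset.sum_congr rfl fun k _ => ?_
          have : (t - 1 - k : ℤ) = t - k - 1 := by ring
          rw [this]
          ring
      _ = _ := by rw [horth]
  induction m with
  | zero =>
    rw [Nat.cast_zero, E 0]
    have hz : (∑ k ∈ range (n+1), (-1:R)^k * ee (w ∘ some) k * hhZ w ((0:ℤ)-1 - k)) = 0 :=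
      Finset.sum_eq_zero fun k _ => by rw [hhZ_neg _ (by omega)]; ring
    rw [hz]
    simp
  | succ m ih =>
    rw [E ((m+1 : ℕ) : ℤ)]
    have harg : ((m + 1 : ℕ) : ℤ) - 1 = (m : ℤ) := by push_cast; ring
    rw [harg, ih, if_neg (by omega)]
    ring

lemma esymm_eval (s : Multiset R) (x : R) :
    ∑ k ∈ range (Multiset.card s + 1), (-1:R)^k * s.esymm k * x ^ (Multiset.card s - k)
      = (s.map (fun a => x - a)).prod := by
  have h := congrArg (Polynomial.eval x) (Multiset.prod_X_sub_X_eq_sum_esymm s)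
  rw [Polynomial.eval_multiset_prod, Multiset.map_map, Polynomial.eval_finset_sum] at h
  rw [show (Multiset.map ((fun p => Polynomial.eval x p) ∘ fun t =>
      Polynomial.X - Polynomial.C t) s) = Multiset.map (fun a => x - a) s from
    Multiset.map_congr rfl fun a _ => by simp] at h
  rw [h]
  refine Finset.sum_congr rfl fun k _ => ?_
  simp only [Polynomial.eval_mul, Polynomial.eval_pow, Polynomial.eval_neg, Polynomial.eval_one,
    Polynomial.eval_C, Polynomial.eval_X]
  ring

end Bialternant

open Finset Bialternant in
/-- The bialternant formula for Schur polynomials: for a partition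
`λ = (λ_1 ≥ … ≥ λ_N ≥ 0)` (an antitone `lam : ℕ → ℕ` of length `≤ N`, zero-based) and
distinct `u_1, …, u_N` in an integral domain,
`s_λ(u) · ∏_{i<j}(u_i − u_j) = det[u_j^{N−i+λ_i}]`, where
`s_λ = det[h_{λ_i+j−i}(u)]`. -/
theorem stmt13 {R : Type*} [CommRing R] [IsDomain R] (N : ℕ) (u : Fin N → R)
    (hu : Function.Injective u) (lam : ℕ → ℕ) (hanti : Antitone lam)
    (hlen : ∀ i, N ≤ i → lam i = 0) :
    Matrix.det (Matrix.of fun i j : Fin N => hZ u ((lam i.1 : ℤ) + j.1 - i.1)) *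
        (∏ i : Fin N, ∏ j ∈ Finset.Ioi i, (u i - u j)) =
      Matrix.det (Matrix.of fun i j : Fin N => u j ^ (N - 1 - i.1 + lam i.1)) := by
  classical
  have hZ_eq : ∀ (u : Fin N → R) (t : ℤ), hZ u t = hhZ u t := fun _ _ => rfl
  obtain _ | n := N
  · -- N = 0
    simp [Matrix.det_fin_zero]
  -- N = n + 1
  set q : Fin (n+1) → (Option (Fin n) ≃ Fin (n+1)) :=
    fun j => (finSuccEquiv n).symm.trans (Equiv.swap 0 j) with hqdef
  set Hm : Matrix (Fin (n+1)) (Fin (n+1)) R :=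
    Matrix.of fun i j : Fin (n+1) => hZ u ((lam i.1 : ℤ) + j.1 - i.1) with hHm
  set P : Matrix (Fin (n+1)) (Fin (n+1)) R :=
    Matrix.of fun i j : Fin (n+1) => u j ^ (n + 1 - 1 - i.1 + lam i.1) with hP
  set A : Matrix (Fin (n+1)) (Fin (n+1)) R :=
    Matrix.of fun i k : Fin (n+1) => hZ u ((lam i.1 : ℤ) + (n - k.1 : ℕ) - i.1) with hA
  set B : Matrix (Fin (n+1)) (Fin (n+1)) R :=
    Matrix.of fun k j : Fin (n+1) => (-1:R)^k.1 * ee (u ∘ (q j) ∘ some) k.1 with hB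
  set V : Matrix (Fin (n+1)) (Fin (n+1)) R :=
    Matrix.of fun i k : Fin (n+1) => u i ^ (n - k.1) with hV
  have hwnone : ∀ j, (u ∘ (q j)) none = u j := by
    intro j
    simp [hqdef, Equiv.swap_apply_left]
  -- the multiset of the values of `u ∘ q j ∘ some` is the values of `u` off `j`
  have hms : ∀ j : Fin (n+1),
      Multiset.map (u ∘ (q j) ∘ some) Finset.univ.val
        = Multiset.map u ((Finset.univ.erase j).val) := by
    intro j
    have h1 : (u ∘ (q j) ∘ some) = u ∘ (Equiv.swap 0 j) ∘ Fin.succ := by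
      funext i
      simp [hqdef, finSuccEquiv_symm_some]
    rw [h1]
    have h2 : Multiset.map (u ∘ (Equiv.swap 0 j) ∘ Fin.succ) Finset.univ.val
        = Multiset.map u (Multiset.map (Equiv.swap 0 j)
            (Multiset.map Fin.succ Finset.univ.val)) := by
      rw [Multiset.map_map, Multiset.map_map]
      rfl
    rw [h2]
    have h3 : Multiset.map Fin.succ (Finset.univ.val : Multiset (Fin n))
        = (Finset.univ.val : Multiset (Fin (n+1))).erase 0 := by
      have := Fin.univ_succ (n := n)
      rw [this]
      rw [Finset.cons_val, Multiset.erase_cons_head, Finset.map_val]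
      rfl
    rw [h3]
    have h4 : Multiset.map (⇑(Equiv.swap 0 j))
          ((Finset.univ.val : Multiset (Fin (n+1))).erase 0)
        = (Multiset.map (⇑(Equiv.swap 0 j)) (Finset.univ.val :
            Multiset (Fin (n+1)))).erase (Equiv.swap 0 j 0) := by
      rw [Multiset.map_erase _ (Equiv.injective _)]
    rw [h4, Equiv.swap_apply_left]
    have h5 : Multiset.map (⇑(Equiv.swap 0 j)) (Finset.univ.val : Multiset (Fin (n+1)))
        = Finset.univ.val := by
      calc Multiset.map (⇑(Equiv.swap 0 j)) Finset.univ.val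
          = (Finset.univ.map (Equiv.swap 0 j).toEmbedding).val := rfl
        _ = Finset.univ.val := by rw [Finset.univ_map_equiv_to_embedding]
    rw [h5, Finset.erase_val]
  have cardErase : ∀ j : Fin (n+1), Multiset.card ((Finset.univ.erase j).val) = n := by
    intro j
    have : (Finset.univ.erase j).card = n := by
      rw [Finset.card_erase_of_mem (Finset.mem_univ j)]
      simp
    exact this
  -- A * B = P
  have hAB : A * B = P := by
    ext i j
    rw [Matrix.mul_apply]
    set m : ℕ := n - i.1 + lam i.1 with hm
    have hkey := key n (u ∘ (q j)) m
    rw [hwnone] at hkey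
    have hconv : ∑ k : Fin (n+1), A i k * B k j
        = ∑ k ∈ range (n+1), (hZ u ((lam i.1 : ℤ) + ((n - k : ℕ) : ℤ) - i.1)
            * ((-1:R)^k * ee (u ∘ (q j) ∘ some) k)) :=
      Fin.sum_univ_eq_sum_range
        (fun k => hZ u ((lam i.1 : ℤ) + ((n - k : ℕ) : ℤ) - i.1)
          * ((-1:R)^k * ee (u ∘ (q j) ∘ some) k)) (n+1)
    rw [hconv]
    calc ∑ k ∈ range (n+1), (hZ u ((lam i.1 : ℤ) + ((n - k : ℕ) : ℤ) - i.1)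
            * ((-1:R)^k * ee (u ∘ (q j) ∘ some) k))
        = ∑ k ∈ range (n+1), (-1:R)^k * ee (u ∘ (q j) ∘ some) k
            * hhZ (u ∘ (q j)) ((m:ℤ) - k) := by
          refine Finset.sum_congr rfl fun k hk => ?_
          have hk2 : k ≤ n := by have := Finset.mem_range.1 hk; omega
          have harg : ((lam i.1 : ℤ) + ((n - k : ℕ) : ℤ) - i.1) = (m:ℤ) - k := by
            have hi : i.1 ≤ n := Nat.lt_succ_iff.mp i.isLt
            simp only [hm]
            omega
          rw [hZ_eq, harg, hhZ_equiv (q j) u]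
          ring
      _ = u j ^ m := hkey
  -- V * B = diagonal
  have hd : ∀ x : R, ∀ j : Fin (n+1),
      ∑ k : Fin (n+1), x ^ (n - k.1) * ((-1:R)^k.1 * ee (u ∘ (q j) ∘ some) k.1)
        = ∏ l ∈ Finset.univ.erase j, (x - u l) := by
    intro x j
    have hev := esymm_eval (Multiset.map u ((Finset.univ.erase j).val)) x
    rw [Multiset.card_map, cardErase j] at hev
    have hconv2 : ∑ k : Fin (n+1), x ^ (n - k.1) * ((-1:R)^k.1 * ee (u ∘ (q j) ∘ some) k.1)
        = ∑ k ∈ range (n+1), x ^ (n - k) * ((-1:R)^k * ee (u ∘ (q j) ∘ some) k) :=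
      Fin.sum_univ_eq_sum_range
        (fun k => x ^ (n - k) * ((-1:R)^k * ee (u ∘ (q j) ∘ some) k)) (n+1)
    have hconv3 : ∑ k ∈ range (n+1), x ^ (n - k) * ((-1:R)^k * ee (u ∘ (q j) ∘ some) k)
        = ∑ k ∈ range (n+1), (-1:R)^k * (Multiset.map u ((Finset.univ.erase j).val)).esymm k
            * x ^ (n - k) := by
      refine Finset.sum_congr rfl fun k _ => ?_
      rw [show ee (u ∘ (q j) ∘ some) k
          = (Multiset.map u ((Finset.univ.erase j).val)).esymm k by rw [ee, hms j]]
      ring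
    rw [hconv2, hconv3, hev]
    rw [Finset.prod_eq_multiset_prod]
    rw [Multiset.map_map]
    rfl
  have hVB : V * B = Matrix.diagonal (fun j => ∏ l ∈ Finset.univ.erase j, (u j - u l)) := by
    ext i j
    rw [Matrix.mul_apply]
    by_cases hij : i = j
    · subst hij
      rw [Matrix.diagonal_apply_eq]
      exact hd (u i) i
    · rw [Matrix.diagonal_apply_ne _ hij]
      rw [show (∑ k : Fin (n+1), V i k * B k j)
          = ∏ l ∈ Finset.univ.erase j, (u i - u l) from hd (u i) j]
      exact Finset.prod_eq_zero (Finset.mem_erase.2 ⟨hij, Finset.mem_univ i⟩) (by simp)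
  -- relating A, V to Hm, vandermonde via column reversal
  have hArev : A = Hm.submatrix id Fin.revPerm := by
    ext i k
    have : ((Fin.revPerm k : Fin (n+1)).1 : ℤ) = ((n - k.1 : ℕ) : ℤ) := by
      have h1 : (Fin.revPerm k : Fin (n+1)).1 = n - k.1 := by
        simp [Fin.revPerm, Fin.rev]
      rw [h1]
    simp only [hA, hHm, Matrix.submatrix_apply, Matrix.of_apply, id_eq]
    rw [this]
  have hVrev : V = (Matrix.vandermonde u).submatrix id Fin.revPerm := by
    ext i k
    have h1 : (Fin.revPerm k : Fin (n+1)).1 = n - k.1 := by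
      simp [Fin.revPerm, Fin.rev]
    simp only [hV, Matrix.submatrix_apply, Matrix.of_apply, id_eq, Matrix.vandermonde_apply, h1]
  set s : R := ((Equiv.Perm.sign (Fin.revPerm : Equiv.Perm (Fin (n+1))) : ℤ) : R) with hs
  have hdetA : A.det = s * Hm.det := by
    rw [hArev, Matrix.det_permute']
  have hdetV : V.det = s * (Matrix.vandermonde u).det := by
    rw [hVrev, Matrix.det_permute']
  have hE1 : A.det * B.det = P.det := by rw [← Matrix.det_mul, hAB]
  have hE2 : V.det * B.det = ∏ j, ∏ l ∈ Finset.univ.erase j, (u j - u l) := by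
    rw [← Matrix.det_mul, hVB, Matrix.det_diagonal]
  -- product of the diagonal entries equals Π * Π'
  have hprod : (∏ j, ∏ l ∈ Finset.univ.erase j, (u j - u l))
      = (∏ i : Fin (n+1), ∏ j ∈ Finset.Ioi i, (u i - u j))
        * ∏ i : Fin (n+1), ∏ j ∈ Finset.Ioi i, (u j - u i) := by
    have h := Finset.prod_prod_Ioi_mul_eq_prod_prod_off_diag (fun a b : Fin (n+1) => u b - u a)
    beta_reduce at h
    have h2 : ((∏ i : Fin (n+1), ∏ j ∈ Finset.Ioi i, (u i - u j))
        * ∏ i : Fin (n+1), ∏ j ∈ Finset.Ioi i, (u j - u i))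
        = ∏ j, ∏ l ∈ Finset.univ.erase j, (u j - u l) := by
      calc ((∏ i : Fin (n+1), ∏ j ∈ Finset.Ioi i, (u i - u j))
            * ∏ i : Fin (n+1), ∏ j ∈ Finset.Ioi i, (u j - u i))
          = ∏ i : Fin (n+1), ∏ j ∈ Finset.Ioi i, ((u i - u j) * (u j - u i)) := by
            simp_rw [Finset.prod_mul_distrib]
        _ = _ := by
            rw [h]
            refine Finset.prod_congr rfl fun i _ => Finset.prod_congr ?_ fun _ _ => rfl
            ext a
            simp [eq_comm]
    exact h2.symm
  have hvdm : (Matrix.vandermonde u).det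
      = ∏ i : Fin (n+1), ∏ j ∈ Finset.Ioi i, (u j - u i) := Matrix.det_vandermonde u
  have hvdm_ne : (Matrix.vandermonde u).det ≠ 0 := by
    rw [hvdm]
    refine Finset.prod_ne_zero_iff.2 fun i _ => Finset.prod_ne_zero_iff.2 fun j hj => ?_
    have hij : i < j := Finset.mem_Ioi.1 hj
    exact sub_ne_zero.2 fun he => hij.ne' (hu he)
  -- final computation
  have hmain : (Matrix.vandermonde u).det * (Hm.det
      * ∏ i : Fin (n+1), ∏ j ∈ Finset.Ioi i, (u i - u j)) = (Matrix.vandermonde u).det * P.det := by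
    calc (Matrix.vandermonde u).det * (Hm.det * ∏ i : Fin (n+1), ∏ j ∈ Finset.Ioi i, (u i - u j))
        = Hm.det * ((∏ i : Fin (n+1), ∏ j ∈ Finset.Ioi i, (u i - u j))
            * (Matrix.vandermonde u).det) := by ring
      _ = Hm.det * ∏ j, ∏ l ∈ Finset.univ.erase j, (u j - u l) := by rw [hprod, hvdm]
      _ = Hm.det * (V.det * B.det) := by rw [hE2]
      _ = Hm.det * (s * (Matrix.vandermonde u).det * B.det) := by rw [hdetV]
      _ = (Matrix.vandermonde u).det * ((s * Hm.det) * B.det) := by ring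
      _ = (Matrix.vandermonde u).det * (A.det * B.det) := by rw [hdetA]
      _ = (Matrix.vandermonde u).det * P.det := by rw [hE1]
  exact mul_left_cancel₀ hvdm_ne hmain
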